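/- Let H(s) = (1−s)L_G + s·diag(W) with min-gap condition γ(1) ≥ 1 (the second-smallest value of W exceeds the minimum of W by at least 1, and W has a unique minimizer). Then for all s ∈ [1 − 1/(8d_G), 1], the spectral gap satisfies γ(s) ≥ 1/2 − 1/(8d_G); in particular γ(s) ≥ 7/16 whenever d_G ≥ 2. -/

import Mathlib

open Matrix

noncomputable def sortedEigenvalues {n : Type*} [Fintype n] [DecidableEq n]
    {A : Matrix n n ℝ} (hA : A.IsHermitian) : Fin (Fintype.card n) → ℝ :=
  fun i =>
    let f : Fin (Fintype.card n) → ℝ := hA.eigenvalues ∘ (Fintype.equivFin n).symm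
    f (Tuple.sort f i)

/-- Gap between the two smallest eigenvalues, counted with multiplicity. -/
noncomputable def specGap {n : Type*} [Fintype n] [DecidableEq n]
    {A : Matrix n n ℝ} (hA : A.IsHermitian) : ℝ :=
  if h : 2 ≤ Fintype.card n then
    sortedEigenvalues hA ⟨1, by omega⟩ - sortedEigenvalues hA ⟨0, by omega⟩
  else 0

/-- The interpolating Hamiltonian `H(s) = (1−s)L_G + s·diag W`. -/
noncomputable def hamiltonianS {V : Type*} [Fintype V] [DecidableEq V]
    (G : SimpleGraph V) [DecidableRel G.Adj] (W : V → ℝ) (s : ℝ) : Matrix V V ℝ :=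
  (1 - s) • G.lapMatrix ℝ + s • Matrix.diagonal W

lemma isHermitian_smul_real {n : Type*} {A : Matrix n n ℝ}
    (h : A.IsHermitian) (c : ℝ) : (c • A).IsHermitian := by
  unfold Matrix.IsHermitian at *
  rw [Matrix.conjTranspose_smul, h, star_trivial]

lemma hamiltonianS_isHermitian {V : Type*} [Fintype V] [DecidableEq V]
    (G : SimpleGraph V) [DecidableRel G.Adj] (W : V → ℝ) (s : ℝ) :
    (hamiltonianS G W s).IsHermitian :=
  (isHermitian_smul_real (SimpleGraph.posSemidef_lapMatrix ℝ G).isHermitian (1 - s)).add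
    (isHermitian_smul_real (Matrix.isHermitian_diagonal W) s)

section Helpers

set_option linter.unusedSectionVars false

variable {V : Type*} [Fintype V] [DecidableEq V]

private lemma unitary_dot_aux' (U : Matrix V V ℝ) (x : V → ℝ) (y : V → ℝ) :
    (U *ᵥ x) ⬝ᵥ y = x ⬝ᵥ ((star U) *ᵥ y) := by
  rw [star_eq_conjTranspose, conjTranspose_eq_transpose_of_trivial, mulVec_transpose,
    dotProduct_comm, dotProduct_mulVec, dotProduct_comm]

private lemma quad_ge_of_le_eigenvalues' {A : Matrix V V ℝ} (hA : A.IsHermitian) (c : ℝ)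
    (hc : ∀ i, c ≤ hA.eigenvalues i) (v : V → ℝ) :
    c * (v ⬝ᵥ v) ≤ v ⬝ᵥ (A *ᵥ v) := by
  set U := (hA.eigenvectorUnitary : Matrix V V ℝ) with hU
  set w := star U *ᵥ v with hw
  have hUU : U * star U = 1 := (Matrix.mem_unitaryGroup_iff).mp hA.eigenvectorUnitary.2
  have hUU' : star U * U = 1 := (Matrix.mem_unitaryGroup_iff').mp hA.eigenvectorUnitary.2
  have hcol : ∀ z : V → ℝ, star U *ᵥ (U *ᵥ z) = z := fun z => by
    rw [mulVec_mulVec, hUU', one_mulVec]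
  have hv : v = U *ᵥ w := by rw [hw, mulVec_mulVec, hUU, one_mulVec]
  have hdot : v ⬝ᵥ v = w ⬝ᵥ w := by
    conv_lhs => rw [hv]
    rw [unitary_dot_aux', hcol]
  have hD : (RCLike.ofReal ∘ hA.eigenvalues : V → ℝ) = hA.eigenvalues :=
    funext fun i => by simp
  have hAv : A *ᵥ v = U *ᵥ ((diagonal hA.eigenvalues) *ᵥ w) := by
    conv_lhs => rw [hA.spectral_theorem, hv]
    rw [Unitary.conjStarAlgAut_apply, mulVec_mulVec, Matrix.mul_assoc (U * diagonal (RCLike.ofReal ∘ hA.eigenvalues))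
      (star U) U, hUU', Matrix.mul_one, hD, ← mulVec_mulVec]
  have hquad : v ⬝ᵥ (A *ᵥ v) = ∑ i, hA.eigenvalues i * w i ^ 2 := by
    rw [hAv]
    conv_lhs => rw [hv]
    rw [unitary_dot_aux', hcol]
    simp only [dotProduct, mulVec_diagonal]
    exact Finset.sum_congr rfl fun i _ => by ring
  rw [hdot, hquad]
  have he : c * (w ⬝ᵥ w) = ∑ i, c * w i ^ 2 := by
    simp only [dotProduct, Finset.mul_sum]
    exact Finset.sum_congr rfl fun i _ => by ring
  rw [he]
  exact Finset.sum_le_sum fun i _ => by nlinarith [sq_nonneg (w i), hc i]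

private lemma sorted_le_eigenvalue' {A : Matrix V V ℝ} (hA : A.IsHermitian)
    (h2 : 2 ≤ Fintype.card V) (j : V) :
    sortedEigenvalues hA ⟨0, by omega⟩ ≤ hA.eigenvalues j := by
  set f : Fin (Fintype.card V) → ℝ := hA.eigenvalues ∘ (Fintype.equivFin V).symm with hf
  set σ := Tuple.sort f with hσ
  have hmono := Tuple.monotone_sort f
  have hj : hA.eigenvalues j = f (σ (σ.symm (Fintype.equivFin V j))) := by
    simp [hf]
  rw [hj]
  show (f ∘ σ) ⟨0, by omega⟩ ≤ (f ∘ σ) (σ.symm (Fintype.equivFin V j))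
  exact hmono (by simp [Fin.le_def])

private lemma exists_pair_le_sorted1' {A : Matrix V V ℝ} (hA : A.IsHermitian)
    (h2 : 2 ≤ Fintype.card V) :
    ∃ j₁ j₂ : V, j₁ ≠ j₂ ∧ hA.eigenvalues j₁ ≤ sortedEigenvalues hA ⟨1, by omega⟩ ∧
      hA.eigenvalues j₂ ≤ sortedEigenvalues hA ⟨1, by omega⟩ := by
  set f : Fin (Fintype.card V) → ℝ := hA.eigenvalues ∘ (Fintype.equivFin V).symm with hf
  set σ := Tuple.sort f with hσ
  have hmono := Tuple.monotone_sort f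
  refine ⟨(Fintype.equivFin V).symm (σ ⟨0, by omega⟩), (Fintype.equivFin V).symm (σ ⟨1, by omega⟩),
    ?_, ?_, ?_⟩
  · intro h
    have := (Fintype.equivFin V).symm.injective h
    have := σ.injective this
    simp [Fin.ext_iff] at this
  · have : hA.eigenvalues ((Fintype.equivFin V).symm (σ ⟨0, by omega⟩)) =
        (f ∘ σ) ⟨0, by omega⟩ := rfl
    rw [this]
    exact hmono (by simp [Fin.le_def])
  · exact le_of_eq rfl

private lemma eigen_dot' {A : Matrix V V ℝ} (hA : A.IsHermitian) (i j : V) :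
    ⇑(hA.eigenvectorBasis i) ⬝ᵥ ⇑(hA.eigenvectorBasis j) = if i = j then 1 else 0 := by
  have h := hA.eigenvectorBasis.orthonormal
  rw [orthonormal_iff_ite] at h
  have h2 := h i j
  simpa [PiLp.inner_apply, RCLike.inner_apply, dotProduct, mul_comm] using h2

private lemma eigen_quad' {A : Matrix V V ℝ} (hA : A.IsHermitian) (i j : V) :
    ⇑(hA.eigenvectorBasis i) ⬝ᵥ (A *ᵥ ⇑(hA.eigenvectorBasis j)) =
      if i = j then hA.eigenvalues j else 0 := by
  rw [hA.mulVec_eigenvectorBasis, dotProduct_smul, eigen_dot' hA]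
  by_cases h : i = j <;> simp [h]

private lemma second_eigen_ge' {A : Matrix V V ℝ} (hA : A.IsHermitian)
    (h2 : 2 ≤ Fintype.card V) (x₀ : V) (a : ℝ)
    (h : ∀ v : V → ℝ, v x₀ = 0 → a * (v ⬝ᵥ v) ≤ v ⬝ᵥ (A *ᵥ v)) :
    a ≤ sortedEigenvalues hA ⟨1, by omega⟩ := by
  obtain ⟨j₁, j₂, hne, hle₁, hle₂⟩ := exists_pair_le_sorted1' hA h2
  set u₁ : V → ℝ := ⇑(hA.eigenvectorBasis j₁) with hu₁
  set u₂ : V → ℝ := ⇑(hA.eigenvectorBasis j₂) with hu₂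
  set b₁ : ℝ := u₁ x₀ with hb₁
  set b₂ : ℝ := u₂ x₀ with hb₂
  by_cases hb : b₁ = 0 ∧ b₂ = 0
  · have hx : u₁ x₀ = 0 := hb.1
    have := h u₁ hx
    have hdot : u₁ ⬝ᵥ u₁ = 1 := by simpa using eigen_dot' hA j₁ j₁
    have hquad : u₁ ⬝ᵥ (A *ᵥ u₁) = hA.eigenvalues j₁ := by simpa using eigen_quad' hA j₁ j₁
    rw [hdot, hquad, mul_one] at this
    linarith
  · set v : V → ℝ := b₂ • u₁ - b₁ • u₂ with hv
    have hvx : v x₀ = 0 := by simp [hv, hb₁, hb₂]; ring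
    have hd12 : u₁ ⬝ᵥ u₂ = 0 := by simpa [hne] using eigen_dot' hA j₁ j₂
    have hd21 : u₂ ⬝ᵥ u₁ = 0 := by simpa [hne.symm] using eigen_dot' hA j₂ j₁
    have hd11 : u₁ ⬝ᵥ u₁ = 1 := by simpa using eigen_dot' hA j₁ j₁
    have hd22 : u₂ ⬝ᵥ u₂ = 1 := by simpa using eigen_dot' hA j₂ j₂
    have hq12 : u₁ ⬝ᵥ (A *ᵥ u₂) = 0 := by simpa [hne] using eigen_quad' hA j₁ j₂
    have hq21 : u₂ ⬝ᵥ (A *ᵥ u₁) = 0 := by simpa [hne.symm] using eigen_quad' hA j₂ j₁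
    have hq11 : u₁ ⬝ᵥ (A *ᵥ u₁) = hA.eigenvalues j₁ := by simpa using eigen_quad' hA j₁ j₁
    have hq22 : u₂ ⬝ᵥ (A *ᵥ u₂) = hA.eigenvalues j₂ := by simpa using eigen_quad' hA j₂ j₂
    have hdotv : v ⬝ᵥ v = b₂ ^ 2 + b₁ ^ 2 := by
      simp only [hv, sub_dotProduct, dotProduct_sub, smul_dotProduct, dotProduct_smul,
        hd11, hd12, hd21, hd22, smul_eq_mul]
      ring
    have hquadv : v ⬝ᵥ (A *ᵥ v) = b₂ ^ 2 * hA.eigenvalues j₁ + b₁ ^ 2 * hA.eigenvalues j₂ := by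
      simp only [hv, mulVec_sub, mulVec_smul, sub_dotProduct, dotProduct_sub, smul_dotProduct,
        dotProduct_smul, hq11, hq12, hq21, hq22, smul_eq_mul]
      ring
    have hpos : 0 < b₂ ^ 2 + b₁ ^ 2 := by
      rcases not_and_or.mp hb with h1 | h1 <;> positivity
    have := h v hvx
    rw [hdotv, hquadv] at this
    nlinarith [sq_nonneg b₁, sq_nonneg b₂]

private lemma adj_sum_eq' (G : SimpleGraph V) [DecidableRel G.Adj] (i : V) (c : ℝ) :
    ∑ j : V, (if G.Adj i j then c else 0) = (G.degree i : ℝ) * c := by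
  rw [← Finset.sum_filter, ← SimpleGraph.neighborFinset_eq_filter, Finset.sum_const,
    SimpleGraph.card_neighborFinset_eq_degree, nsmul_eq_mul]

private lemma lap_quad_nonneg' (G : SimpleGraph V) [DecidableRel G.Adj] (v : V → ℝ) :
    0 ≤ v ⬝ᵥ (G.lapMatrix ℝ *ᵥ v) := by
  have := (SimpleGraph.posSemidef_lapMatrix ℝ G).dotProduct_mulVec_nonneg v
  simpa using this

private lemma lap_quad_le' (G : SimpleGraph V) [DecidableRel G.Adj] (v : V → ℝ) :
    v ⬝ᵥ (G.lapMatrix ℝ *ᵥ v) ≤ 2 * (G.maxDegree : ℝ) * (v ⬝ᵥ v) := by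
  have hq : v ⬝ᵥ (G.lapMatrix ℝ *ᵥ v) =
      (∑ i : V, ∑ j : V, if G.Adj i j then (v i - v j) ^ 2 else 0) / 2 := by
    rw [← Matrix.toLinearMap₂'_apply', SimpleGraph.lapMatrix_toLinearMap₂']
  rw [hq]
  have hbound : ∀ i j : V, (if G.Adj i j then (v i - v j) ^ 2 else 0) ≤
      (if G.Adj i j then 2 * v i ^ 2 else 0) + (if G.Adj i j then 2 * v j ^ 2 else 0) := by
    intro i j
    by_cases h : G.Adj i j <;> simp [h] <;> nlinarith [sq_nonneg (v i + v j)]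
  have hstep : (∑ i : V, ∑ j : V, if G.Adj i j then (v i - v j) ^ 2 else 0) ≤
      ∑ i : V, ∑ j : V, ((if G.Adj i j then 2 * v i ^ 2 else 0) +
        (if G.Adj i j then 2 * v j ^ 2 else 0)) :=
    Finset.sum_le_sum fun i _ => Finset.sum_le_sum fun j _ => hbound i j
  have hT : (∑ i : V, ∑ j : V, ((if G.Adj i j then 2 * v i ^ 2 else 0) +
      (if G.Adj i j then 2 * v j ^ 2 else 0))) =
      ∑ i : V, (G.degree i : ℝ) * (4 * v i ^ 2) := by
    simp only [Finset.sum_add_distrib]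
    rw [Finset.sum_comm (f := fun i j => if G.Adj i j then 2 * v j ^ 2 else 0)]
    have h1 : ∀ i : V, ∑ j : V, (if G.Adj i j then 2 * v i ^ 2 else 0) =
        (G.degree i : ℝ) * (2 * v i ^ 2) := fun i => adj_sum_eq' G i _
    have h2 : ∀ j : V, ∑ i : V, (if G.Adj i j then 2 * v j ^ 2 else 0) =
        (G.degree j : ℝ) * (2 * v j ^ 2) := by
      intro j
      rw [← adj_sum_eq' G j (2 * v j ^ 2)]
      exact Finset.sum_congr rfl fun i _ => if_congr (G.adj_comm i j) rfl rfl
    rw [Finset.sum_congr rfl fun i _ => h1 i, Finset.sum_congr rfl fun j _ => h2 j,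
      ← Finset.sum_add_distrib]
    exact Finset.sum_congr rfl fun i _ => by ring
  have hdegle : ∀ i : V, (G.degree i : ℝ) * (4 * v i ^ 2) ≤
      (G.maxDegree : ℝ) * (4 * v i ^ 2) := by
    intro i
    have : (G.degree i : ℝ) ≤ (G.maxDegree : ℝ) := by
      exact_mod_cast G.degree_le_maxDegree i
    nlinarith [sq_nonneg (v i)]
  have hfin : (∑ i : V, ∑ j : V, if G.Adj i j then (v i - v j) ^ 2 else 0) ≤
      ∑ i : V, (G.maxDegree : ℝ) * (4 * v i ^ 2) := by
    refine hstep.trans ?_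
    rw [hT]
    exact Finset.sum_le_sum fun i _ => hdegle i
  have hvv : v ⬝ᵥ v = ∑ i : V, v i ^ 2 := by
    simp [dotProduct, sq]
  rw [hvv]
  have : ∑ i : V, (G.maxDegree : ℝ) * (4 * v i ^ 2) = 4 * (G.maxDegree : ℝ) * ∑ i, v i ^ 2 := by
    rw [Finset.mul_sum]
    exact Finset.sum_congr rfl fun i _ => by ring
  rw [this] at hfin
  linarith

private lemma maxDegree_pos' (G : SimpleGraph V) [DecidableRel G.Adj] (hG : G.Connected)
    (hcard : 2 ≤ Fintype.card V) : 1 ≤ G.maxDegree := by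
  obtain ⟨x, y, hxy⟩ := Fintype.exists_pair_of_one_lt_card (α := V) (by omega)
  obtain ⟨w⟩ := hG.preconnected x y
  cases w with
  | nil => exact absurd rfl hxy
  | cons h p =>
    have hdeg : 0 < G.degree x := by
      rw [SimpleGraph.degree_pos_iff_exists_adj]
      exact ⟨_, h⟩
    calc 1 ≤ G.degree x := hdeg
    _ ≤ G.maxDegree := G.degree_le_maxDegree x

private lemma ham_quad' (G : SimpleGraph V) [DecidableRel G.Adj] (W : V → ℝ) (s : ℝ)
    (v : V → ℝ) :
    v ⬝ᵥ (hamiltonianS G W s *ᵥ v) =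
      (1 - s) * (v ⬝ᵥ (G.lapMatrix ℝ *ᵥ v)) + s * (∑ i, W i * v i ^ 2) := by
  have hdiag : v ⬝ᵥ (Matrix.diagonal W *ᵥ v) = ∑ i, W i * v i ^ 2 := by
    simp only [dotProduct, mulVec_diagonal]
    exact Finset.sum_congr rfl fun i _ => by ring
  rw [hamiltonianS, add_mulVec, smul_mulVec, smul_mulVec, dotProduct_add,
    dotProduct_smul, dotProduct_smul, smul_eq_mul, smul_eq_mul, hdiag]

end Helpers

/-- Endgame gap bound for adiabatic optimization: if `W` has a unique minimizer and
its second-smallest value exceeds its minimum by at least `1`, then for all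
`s ∈ [1 − 1/(8d_G), 1]` the spectral gap of `H(s) = (1−s)L_G + s·diag W` is at least
`1/2 − 1/(8d_G)`; in particular it is at least `7/16` when `d_G ≥ 2`. -/
theorem stmt_18 {V : Type*} [Fintype V] [DecidableEq V]
    (G : SimpleGraph V) [DecidableRel G.Adj] (hG : G.Connected)
    (hcard : 2 ≤ Fintype.card V) (W : V → ℝ)
    (hmin : ∃ x₀ : V, ∀ x, x ≠ x₀ → W x₀ + 1 ≤ W x) :
    ∀ s ∈ Set.Icc (1 - 1 / (8 * (G.maxDegree : ℝ))) 1,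
      specGap (hamiltonianS_isHermitian G W s) ≥
          1 / 2 - 1 / (8 * (G.maxDegree : ℝ)) ∧
        (2 ≤ G.maxDegree → specGap (hamiltonianS_isHermitian G W s) ≥ 7 / 16) := by
  obtain ⟨x₀, hx₀⟩ := hmin
  intro s hs
  obtain ⟨hs1, hs2⟩ := hs
  have hd1 : (1 : ℝ) ≤ (G.maxDegree : ℝ) := by
    exact_mod_cast maxDegree_pos' G hG hcard
  set d : ℝ := (G.maxDegree : ℝ) with hd
  have hd0 : (0 : ℝ) < 8 * d := by linarith
  have h8 : 1 / (8 * d) ≤ 1 / 8 := by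
    rw [div_le_div_iff₀ hd0 (by norm_num)]
    nlinarith
  have hs0 : 0 ≤ s := by linarith
  have hs1' : 1 - s ≤ 1 / (8 * d) := by linarith
  have hs1'' : 0 ≤ 1 - s := by linarith
  set H := hamiltonianS G W s with hH
  set hHerm := hamiltonianS_isHermitian G W s with hHe
  -- upper bound for the smallest sorted eigenvalue
  set lam0 := sortedEigenvalues hHerm ⟨0, by omega⟩ with hlam0
  set lam1 := sortedEigenvalues hHerm ⟨1, by omega⟩ with hlam1
  have key1 : lam0 ≤ s * W x₀ + (1 - s) * (2 * d) := by
    set e : V → ℝ := Pi.single x₀ 1 with he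
    have hee : e ⬝ᵥ e = 1 := by
      simp [he, dotProduct, Pi.single_apply]
    have h1 := quad_ge_of_le_eigenvalues' hHerm lam0
      (fun j => sorted_le_eigenvalue' hHerm hcard j) e
    rw [hee, mul_one] at h1
    have h2 : e ⬝ᵥ (H *ᵥ e) ≤ s * W x₀ + (1 - s) * (2 * d) := by
      rw [hH, ham_quad']
      have hW : (∑ i, W i * e i ^ 2) = W x₀ := by
        simp [he, Pi.single_apply, mul_ite, Finset.sum_ite_eq']
      rw [hW]
      have hL : e ⬝ᵥ (G.lapMatrix ℝ *ᵥ e) ≤ 2 * d * 1 := by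
        have := lap_quad_le' G e
        rwa [hee] at this
      nlinarith [lap_quad_nonneg' G e]
    exact h1.trans h2
  -- lower bound for the second sorted eigenvalue
  have key2 : s * (W x₀ + 1) ≤ lam1 := by
    apply second_eigen_ge' hHerm hcard x₀
    intro v hvx
    rw [ham_quad']
    have hvv : v ⬝ᵥ v = ∑ i, v i ^ 2 := by simp [dotProduct, sq]
    have hWsum : (∑ i, (W x₀ + 1) * v i ^ 2) ≤ ∑ i, W i * v i ^ 2 := by
      apply Finset.sum_le_sum
      intro i _
      by_cases hi : i = x₀
      · subst hi; rw [hvx]; ring_nf; simp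
      · nlinarith [sq_nonneg (v i), hx₀ i hi]
    have hlap := lap_quad_nonneg' G v
    have : s * (∑ i, (W x₀ + 1) * v i ^ 2) ≤ s * (∑ i, W i * v i ^ 2) := by
      exact mul_le_mul_of_nonneg_left hWsum hs0
    rw [hvv]
    have heq : s * (W x₀ + 1) * (∑ i, v i ^ 2) = s * (∑ i, (W x₀ + 1) * v i ^ 2) := by
      rw [Finset.mul_sum, Finset.mul_sum]
      exact Finset.sum_congr rfl fun i _ => by ring
    nlinarith [mul_nonneg hs1'' hlap]
  have hgap : specGap hHerm = lam1 - lam0 := by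
    rw [specGap, dif_pos hcard]
  have hinv : (1 / (8 * d)) * (8 * d) = 1 := by
    field_simp
  have main : specGap hHerm ≥ 1 / 2 - 1 / (8 * d) := by
    rw [hgap]
    have h2d : (1 - s) * (2 * d) ≤ 1 / 4 := by
      have := mul_le_mul_of_nonneg_right hs1' (by linarith : (0:ℝ) ≤ 2 * d)
      nlinarith
    have : lam1 - lam0 ≥ s - (1 - s) * (2 * d) := by linarith
    have hs' : s ≥ 1 - 1 / (8 * d) := hs1
    linarith
  refine ⟨main, fun hd2 => ?_⟩
  have hd2' : (2 : ℝ) ≤ d := by rw [hd]; exact_mod_cast hd2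
  have h16 : 1 / (8 * d) ≤ 1 / 16 := by
    rw [div_le_div_iff₀ hd0 (by norm_num)]
    nlinarith
  linarith
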